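/- Let N = 2n be even, f ∈ [0,1/2), and η_{N} = (1-2f)/N, η_{N-1} = (1-2f)/(N-1). Then the Chernoff information between Bernoulli(1/2) and Bernoulli(1/2 - η_N) is at most -log(((N-1)/N)·√(1-η_{N-1}²) + 1/N). -/

import Mathlib

set_option maxHeartbeats 1000000 in
/-- Two-point Hölder inequality via weighted AM-GM. -/
lemma holder2 (a b c d l : ℝ) (ha : 0 ≤ a) (hb : 0 ≤ b) (hc : 0 ≤ c) (hd : 0 ≤ d)
    (hl : 0 ≤ l) (hl1 : l ≤ 1) :
    a ^ l * c ^ (1 - l) + b ^ l * d ^ (1 - l) ≤ (a + b) ^ l * (c + d) ^ (1 - l) := by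
  rcases eq_or_lt_of_le (by linarith : (0:ℝ) ≤ a + b) with hab | hab
  · have ha0 : a = 0 := by linarith
    have hb0 : b = 0 := by linarith
    subst ha0 hb0
    by_cases hl0 : l = 0
    · simp [hl0]
    · simp [Real.zero_rpow hl0]
  rcases eq_or_lt_of_le (by linarith : (0:ℝ) ≤ c + d) with hcd | hcd
  · have hc0 : c = 0 := by linarith
    have hd0 : d = 0 := by linarith
    subst hc0 hd0
    by_cases hl0 : 1 - l = 0
    · have hl1' : l = 1 := by linarith
      simp [hl1']
    · simp [Real.zero_rpow hl0]
  have h1 := Real.geom_mean_le_arith_mean2_weighted hl (by linarith : (0:ℝ) ≤ 1 - l)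
    (div_nonneg ha hab.le) (div_nonneg hc hcd.le) (by ring)
  have h2 := Real.geom_mean_le_arith_mean2_weighted hl (by linarith : (0:ℝ) ≤ 1 - l)
    (div_nonneg hb hab.le) (div_nonneg hd hcd.le) (by ring)
  have key : (a / (a+b)) ^ l * (c / (c+d)) ^ (1-l) + (b / (a+b)) ^ l * (d / (c+d)) ^ (1-l) ≤ 1 := by
    have : l * (a / (a+b)) + (1-l) * (c / (c+d)) + (l * (b / (a+b)) + (1-l) * (d / (c+d))) = 1 := by
      field_simp
      ring
    linarith
  have hA : (a / (a+b)) ^ l = a ^ l / (a+b) ^ l := Real.div_rpow ha hab.le l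
  have hB : (b / (a+b)) ^ l = b ^ l / (a+b) ^ l := Real.div_rpow hb hab.le l
  have hC : (c / (c+d)) ^ (1-l) = c ^ (1-l) / (c+d) ^ (1-l) := Real.div_rpow hc hcd.le (1-l)
  have hD : (d / (c+d)) ^ (1-l) = d ^ (1-l) / (c+d) ^ (1-l) := Real.div_rpow hd hcd.le (1-l)
  rw [hA, hB, hC, hD] at key
  have hab' : (0:ℝ) < (a+b) ^ l := Real.rpow_pos_of_pos hab l
  have hcd' : (0:ℝ) < (c+d) ^ (1-l) := Real.rpow_pos_of_pos hcd (1-l)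
  have := mul_le_mul_of_nonneg_left key (le_of_lt (mul_pos hab' hcd'))
  calc a ^ l * c ^ (1 - l) + b ^ l * d ^ (1 - l)
      = (a+b)^l * (c+d)^(1-l) * (a ^ l / (a+b) ^ l * (c ^ (1-l) / (c+d) ^ (1-l))
          + b ^ l / (a+b) ^ l * (d ^ (1-l) / (c+d) ^ (1-l))) := by
        field_simp
    _ ≤ (a+b)^l * (c+d)^(1-l) * 1 := this
    _ = (a+b)^l * (c+d)^(1-l) := by ring

lemma rpow_split (x l : ℝ) (hx : 0 ≤ x) : x ^ l * x ^ (1 - l) = x := by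
  have h : l + (1 - l) = 1 := by ring
  calc x ^ l * x ^ (1 - l) = x ^ (l + (1 - l)) := (Real.rpow_add' hx (by rw [h]; norm_num)).symm
    _ = x ^ (1 : ℝ) := by rw [h]
    _ = x := Real.rpow_one x

set_option maxHeartbeats 1000000 in
theorem chernoff_upper_bound_even (n : ℕ) (hn : 1 ≤ n) (f : ℝ)
    (hf0 : 0 ≤ f) (hf1 : f < 1/2) (N ηN ηN1 : ℝ)
    (hN : N = 2 * n) (hηN : ηN = (1 - 2 * f) / N) (hηN1 : ηN1 = (1 - 2 * f) / (N - 1)) :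
    -sInf ((fun l : ℝ => Real.log ((1/2 : ℝ) ^ l * (1/2 - ηN) ^ (1 - l)
        + (1 - 1/2 : ℝ) ^ l * (1 - (1/2 - ηN)) ^ (1 - l))) '' Set.Icc 0 1) ≤
    -Real.log ((N - 1) / N * Real.sqrt (1 - ηN1 ^ 2) + 1 / N) := by
  have hN2 : (2:ℝ) ≤ N := by
    rw [hN]
    have : (1:ℝ) ≤ (n:ℝ) := by exact_mod_cast hn
    linarith
  have hNpos : (0:ℝ) < N := by linarith
  have hN1pos : (0:ℝ) < N - 1 := by linarith
  set t : ℝ := 1 - 2 * f with ht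
  have htpos : 0 < t := by simp [ht]; linarith
  have ht1 : t ≤ 1 := by simp [ht]; linarith
  have hη1le : t / (N - 1) ≤ 1 := by
    rw [div_le_one hN1pos]; linarith
  have hη1nonneg : 0 ≤ t / (N - 1) := div_nonneg htpos.le hN1pos.le
  -- the constant
  set c : ℝ := (N - 1) / N * Real.sqrt (1 - ηN1 ^ 2) + 1 / N with hc
  have hcpos : 0 < c := by
    rw [hc]
    have h1 : 0 < 1 / N := by positivity
    have h2 : 0 ≤ (N - 1) / N * Real.sqrt (1 - ηN1 ^ 2) :=
      mul_nonneg (by positivity) (Real.sqrt_nonneg _)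
    linarith
  -- key pointwise bound
  have hpoint : ∀ l ∈ Set.Icc (0:ℝ) 1,
      c ≤ (1/2 : ℝ) ^ l * (1/2 - ηN) ^ (1 - l)
        + (1 - 1/2 : ℝ) ^ l * (1 - (1/2 - ηN)) ^ (1 - l) := by
    intro l hl
    obtain ⟨hl0, hl1⟩ := hl
    set η1 : ℝ := t / (N - 1) with hη1
    set x1 : ℝ := (1 - t) / (2 * N) with hx1
    set x3 : ℝ := (1 + t) / (2 * N) with hx3
    set y1 : ℝ := (N - 1) * (1 + η1) / (2 * N) with hy1
    set y2 : ℝ := (N - 1) * (1 - η1) / (2 * N) with hy2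
    have hx1n : 0 ≤ x1 := by
      apply div_nonneg _ (by linarith); linarith
    have hx3n : 0 ≤ x3 := by
      apply div_nonneg _ (by linarith); linarith
    have hy1n : 0 ≤ y1 := by
      apply div_nonneg _ (by linarith)
      have : 0 ≤ 1 + η1 := by linarith [hη1nonneg]
      nlinarith
    have hy2n : 0 ≤ y2 := by
      apply div_nonneg _ (by linarith)
      have : 0 ≤ 1 - η1 := by linarith [hη1le]
      nlinarith
    have e1 : x1 + y1 = 1/2 := by
      rw [hx1, hy1, hη1]
      field_simp
      ring
    have e2 : x1 + y2 = 1/2 - ηN := by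
      rw [hηN]
      rw [hx1, hy2, hη1]
      field_simp
      ring
    have e3 : x3 + y2 = 1 - 1/2 := by
      rw [hx3, hy2, hη1]
      field_simp
      ring
    have e4 : x3 + y1 = 1 - (1/2 - ηN) := by
      rw [hηN]
      rw [hx3, hy1, hη1]
      field_simp
      ring
    have h1 : x1 ^ l * x1 ^ (1-l) + y1 ^ l * y2 ^ (1-l)
        ≤ (1/2 : ℝ) ^ l * (1/2 - ηN) ^ (1 - l) := by
      rw [← e2, ← e1]; exact holder2 x1 y1 x1 y2 l hx1n hy1n hx1n hy2n hl0 hl1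
    have h2 : x3 ^ l * x3 ^ (1-l) + y2 ^ l * y1 ^ (1-l)
        ≤ (1 - 1/2 : ℝ) ^ l * (1 - (1/2 - ηN)) ^ (1 - l) := by
      rw [← e4, ← e3]; exact holder2 x3 y2 x3 y1 l hx3n hy2n hx3n hy1n hl0 hl1
    rw [rpow_split x1 l hx1n] at h1
    rw [rpow_split x3 l hx3n] at h2
    -- AM-GM for the cross terms
    have hprod : (y1 ^ l * y2 ^ (1-l)) * (y2 ^ l * y1 ^ (1-l)) = y1 * y2 := by
      have : (y1 ^ l * y2 ^ (1-l)) * (y2 ^ l * y1 ^ (1-l))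
          = (y1 ^ l * y1 ^ (1-l)) * (y2 ^ l * y2 ^ (1-l)) := by ring
      rw [this, rpow_split y1 l hy1n, rpow_split y2 l hy2n]
    have hAn : 0 ≤ y1 ^ l * y2 ^ (1-l) := by positivity
    have hBn : 0 ≤ y2 ^ l * y1 ^ (1-l) := by positivity
    have hamgm : 2 * Real.sqrt (y1 * y2) ≤ y1 ^ l * y2 ^ (1-l) + y2 ^ l * y1 ^ (1-l) := by
      rw [← hprod, Real.sqrt_mul hAn]
      nlinarith [Real.sq_sqrt hAn, Real.sq_sqrt hBn, sq_nonneg (Real.sqrt (y1 ^ l * y2 ^ (1-l)) - Real.sqrt (y2 ^ l * y1 ^ (1-l))), Real.sqrt_nonneg (y1 ^ l * y2 ^ (1-l)), Real.sqrt_nonneg (y2 ^ l * y1 ^ (1-l))]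
    have hsqrt : 2 * Real.sqrt (y1 * y2) = (N - 1) / N * Real.sqrt (1 - ηN1 ^ 2) := by
      have hyy : y1 * y2 = ((N-1) / (2*N))^2 * (1 - ηN1 ^ 2) := by
        rw [hηN1, hy1, hy2, hη1]
        field_simp
        ring
      rw [hyy, Real.sqrt_mul (sq_nonneg _), Real.sqrt_sq (by positivity : (0:ℝ) ≤ (N-1)/(2*N))]
      field_simp
    have hx13 : x1 + x3 = 1 / N := by
      rw [hx1, hx3]
      rw [← add_div, show (1 - t) + (1 + t) = 2 by ring]
      rw [div_eq_div_iff (by positivity) (ne_of_gt hNpos)]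
      ring
    calc c = (x1 + x3) + (N - 1) / N * Real.sqrt (1 - ηN1 ^ 2) := by rw [hx13, hc]; ring
      _ ≤ (x1 + x3) + (y1 ^ l * y2 ^ (1-l) + y2 ^ l * y1 ^ (1-l)) := by
          rw [← hsqrt]; linarith
      _ ≤ (1/2 : ℝ) ^ l * (1/2 - ηN) ^ (1 - l)
          + (1 - 1/2 : ℝ) ^ l * (1 - (1/2 - ηN)) ^ (1 - l) := by linarith
  -- conclude via sInf
  apply neg_le_neg
  apply le_csInf
  · exact ⟨_, Set.mem_image_of_mem _ (Set.mem_Icc.mpr ⟨le_refl (0:ℝ), zero_le_one⟩)⟩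
  · rintro b ⟨l, hl, rfl⟩
    exact Real.log_le_log hcpos (hpoint l hl)
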